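/- arXiv:2211.15087 — 5 statements merged into one kernel-verified Lean document; each statement's English description precedes it below -/
import Mathlib

section
/- Let r ≥ 1, let d_0, ..., d_r be real numbers, and for p ≥ 0 define C_p = (1/p!) ∑_{j=0}^r j^p d_j, and D_c = ∑_{j=0}^{r-c} d_j d_{j+c}. Then for every integer s ≥ 1, ∑_{c=1}^r c^{2s} D_c = (1/2) ∑_{t=0}^{2s} (-1)^{2s-t} binom(2s, t) · t! · (2s-t)! · C_t · C_{2s-t}. -/
open Finset

theorem weighted_lag_sum_eq_moment_expansion
    (r : ℕ) (hr : 1 ≤ r) (d : ℕ → ℝ)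
    (C : ℕ → ℝ) (hC : ∀ p, C p = (∑ j ∈ Finset.range (r + 1), (j : ℝ) ^ p * d j) / (Nat.factorial p))
    (D : ℕ → ℝ) (hD : ∀ c, D c = ∑ j ∈ Finset.range (r - c + 1), d j * d (j + c))
    (s : ℕ) (hs : 1 ≤ s) :
    ∑ c ∈ Finset.Icc 1 r, (c : ℝ) ^ (2 * s) * D c =
      (1 / 2) * ∑ t ∈ Finset.range (2 * s + 1),
        (-1 : ℝ) ^ (2 * s - t) * (Nat.choose (2 * s) t : ℝ) *
          (Nat.factorial t : ℝ) * (Nat.factorial (2 * s - t) : ℝ) * C t * C (2 * s - t) := by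
  have heven : Even (2 * s) := even_two_mul s
  have hCS : ∀ p : ℕ, (Nat.factorial p : ℝ) * C p = ∑ j ∈ range (r+1), (j:ℝ)^p * d j := by
    intro p
    rw [hC]
    field_simp
  -- Step 1: rewrite the RHS sum as a double sum of d j * d k * (j - k)^(2s)
  have hrhs : ∑ t ∈ range (2*s+1),
      (-1:ℝ)^(2*s-t) * (Nat.choose (2*s) t : ℝ) * (Nat.factorial t : ℝ) *
        (Nat.factorial (2*s-t) : ℝ) * C t * C (2*s-t)
      = ∑ j ∈ range (r+1), ∑ k ∈ range (r+1), d j * d k * ((j:ℝ) - k)^(2*s) := by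
    have step : ∀ t ∈ range (2*s+1),
        (-1:ℝ)^(2*s-t) * (Nat.choose (2*s) t : ℝ) * (Nat.factorial t : ℝ) *
          (Nat.factorial (2*s-t) : ℝ) * C t * C (2*s-t)
        = ∑ j ∈ range (r+1), ∑ k ∈ range (r+1),
            d j * d k * ((j:ℝ)^t * (-(k:ℝ))^(2*s-t) * (Nat.choose (2*s) t : ℝ)) := by
      intro t _
      have key : (-1:ℝ)^(2*s-t) * (Nat.choose (2*s) t : ℝ) * (Nat.factorial t : ℝ) *
          (Nat.factorial (2*s-t) : ℝ) * C t * C (2*s-t)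
          = ((-1:ℝ)^(2*s-t) * (Nat.choose (2*s) t : ℝ)) *
            (((Nat.factorial t : ℝ) * C t) * ((Nat.factorial (2*s-t) : ℝ) * C (2*s-t))) := by
        ring
      rw [key, hCS t, hCS (2*s-t), Finset.sum_mul_sum, Finset.mul_sum]
      refine Finset.sum_congr rfl fun j _ => ?_
      rw [Finset.mul_sum]
      refine Finset.sum_congr rfl fun k _ => ?_
      rw [neg_pow]
      ring
    rw [Finset.sum_congr rfl step, Finset.sum_comm]
    refine Finset.sum_congr rfl fun j _ => ?_
    rw [Finset.sum_comm]
    refine Finset.sum_congr rfl fun k _ => ?_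
    rw [← Finset.mul_sum, sub_eq_add_neg, add_pow]
  -- Step 2: the double sum equals 2 * LHS
  set g : ℕ × ℕ → ℝ := fun p => d p.1 * d p.2 * ((p.1:ℝ) - p.2)^(2*s) with hg
  have hgsym : ∀ p : ℕ × ℕ, g (p.2, p.1) = g p := by
    intro p
    simp only [hg]
    rw [show ((p.2:ℝ) - p.1) = -((p.1:ℝ) - p.2) by ring, heven.neg_pow]
    ring
  set T : Finset (ℕ × ℕ) := range (r+1) ×ˢ range (r+1) with hT
  have hdouble : ∑ j ∈ range (r+1), ∑ k ∈ range (r+1), d j * d k * ((j:ℝ) - k)^(2*s)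
      = ∑ p ∈ T, g p := by
    rw [Finset.sum_product]
  have hsplit : ∑ p ∈ T, g p
      = ∑ p ∈ T.filter (fun p => p.1 < p.2), g p
        + ∑ p ∈ T.filter (fun p => ¬ p.1 < p.2), g p :=
    (Finset.sum_filter_add_sum_filter_not T _ g).symm
  -- the "not <" part equals the "<" part
  have hswap : ∑ p ∈ T.filter (fun p => ¬ p.1 < p.2), g p
      = ∑ p ∈ T.filter (fun p => p.1 ≤ p.2), g p := by
    refine Finset.sum_nbij' (fun p => (p.2, p.1)) (fun p => (p.2, p.1)) ?_ ?_ ?_ ?_ ?_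
    · intro p hp
      simp only [hT, Finset.mem_filter, Finset.mem_product, Finset.mem_range] at hp ⊢
      omega
    · intro p hp
      simp only [hT, Finset.mem_filter, Finset.mem_product, Finset.mem_range] at hp ⊢
      omega
    · intro p _; rfl
    · intro p _; rfl
    · intro p _
      exact (hgsym p).symm
  have hdiag : ∑ p ∈ T.filter (fun p => p.1 ≤ p.2), g p
      = ∑ p ∈ T.filter (fun p => p.1 < p.2), g p := by
    symm
    refine Finset.sum_subset ?_ ?_
    · intro p hp
      simp only [Finset.mem_filter] at hp ⊢
      exact ⟨hp.1, le_of_lt hp.2⟩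
    · intro p hp hnp
      simp only [Finset.mem_filter, not_and, not_lt] at hp hnp
      have : p.1 = p.2 := le_antisymm hp.2 (hnp hp.1)
      simp only [hg, this]
      have : ((p.2:ℝ) - p.2) = 0 := by ring
      rw [this, zero_pow (by omega), mul_zero]
  -- bijection with the lag sum
  have hlag : ∑ p ∈ T.filter (fun p => p.1 < p.2), g p
      = ∑ c ∈ Finset.Icc 1 r, (c : ℝ) ^ (2 * s) * D c := by
    have : ∑ c ∈ Finset.Icc 1 r, (c : ℝ) ^ (2 * s) * D c
        = ∑ c ∈ Finset.Icc 1 r, ∑ j ∈ range (r - c + 1), (c : ℝ) ^ (2 * s) * (d j * d (j + c)) := by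
      refine Finset.sum_congr rfl fun c _ => ?_
      rw [hD, Finset.mul_sum]
    rw [this, Finset.sum_sigma']
    refine Finset.sum_nbij' (fun p => ⟨p.2 - p.1, p.1⟩) (fun q => (q.2, q.2 + q.1)) ?_ ?_ ?_ ?_ ?_
    · intro p hp
      simp only [hT, Finset.mem_filter, Finset.mem_product, Finset.mem_range] at hp
      simp only [Finset.mem_sigma, Finset.mem_Icc, Finset.mem_range]
      omega
    · intro q hq
      simp only [Finset.mem_sigma, Finset.mem_Icc, Finset.mem_range] at hq
      simp only [hT, Finset.mem_filter, Finset.mem_product, Finset.mem_range]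
      omega
    · intro p hp
      simp only [hT, Finset.mem_filter, Finset.mem_product, Finset.mem_range] at hp
      ext <;> simp <;> omega
    · intro q _
      simp only [Nat.add_sub_cancel_left]
    · intro p hp
      simp only [hT, Finset.mem_filter, Finset.mem_product, Finset.mem_range] at hp
      simp only [hg]
      have hc : ((p.2 - p.1 : ℕ) : ℝ) = (p.2 : ℝ) - p.1 := by
        push_cast [Nat.cast_sub (le_of_lt hp.2)]
        ring
      have h1 : p.1 + (p.2 - p.1) = p.2 := by omega
      rw [hc, h1]
      rw [show ((p.1:ℝ) - p.2) = -((p.2:ℝ) - p.1) by ring, heven.neg_pow]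
      ring
  rw [hrhs, hdouble, hsplit, hswap, hdiag, hlag]
  ring
end

section
/- Let r ≥ 1 and let d_0, ..., d_r be real numbers with ∑_{j=0}^r d_j = 0. Then ∑_{c=1}^r c^2 D_c = -(∑_{j=0}^r j d_j)^2, where D_c = ∑_{j=0}^{r-c} d_j d_{j+c}. In particular, ∑_{c=1}^r c^2 D_c = 0 if and only if ∑_{j=0}^r j d_j = 0. -/
open Finset

private lemma key_identity (d : ℕ → ℝ) : ∀ r : ℕ,
    ∑ c ∈ Finset.range (r + 1), (c : ℝ) ^ 2 *
        (∑ j ∈ Finset.range (r - c + 1), d j * d (j + c)) =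
      (∑ j ∈ Finset.range (r + 1), (j : ℝ) ^ 2 * d j) *
          (∑ j ∈ Finset.range (r + 1), d j) -
        (∑ j ∈ Finset.range (r + 1), (j : ℝ) * d j) ^ 2 := by
  intro r
  induction r with
  | zero => simp
  | succ r ih =>
    have e := d (r + 1)
    -- split off c = r+1 in the outer sum
    rw [Finset.sum_range_succ]
    have hlast : ((r + 1 : ℕ) : ℝ) ^ 2 *
        (∑ j ∈ Finset.range (r + 1 - (r + 1) + 1), d j * d (j + (r + 1))) =
        ((r + 1 : ℝ)) ^ 2 * (d 0 * d (r + 1)) := by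
      simp [Nat.sub_self]
    rw [hlast]
    -- for c ≤ r, split inner sum range (r+1-c+1) = range ((r-c+1)+1)
    have hsplit : ∑ c ∈ Finset.range (r + 1), (c : ℝ) ^ 2 *
        (∑ j ∈ Finset.range (r + 1 - c + 1), d j * d (j + c)) =
        (∑ c ∈ Finset.range (r + 1), (c : ℝ) ^ 2 *
          (∑ j ∈ Finset.range (r - c + 1), d j * d (j + c))) +
        ∑ c ∈ Finset.range (r + 1), (c : ℝ) ^ 2 * (d (r - c + 1) * d (r + 1)) := by
      rw [← Finset.sum_add_distrib]
      apply Finset.sum_congr rfl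
      intro c hc
      have hcr : c ≤ r := by simpa using Nat.lt_succ_iff.mp (Finset.mem_range.mp hc)
      have h1 : r + 1 - c + 1 = (r - c + 1) + 1 := by omega
      have h2 : (r - c + 1) + c = r + 1 := by omega
      rw [h1, Finset.sum_range_succ, h2, mul_add]
    rw [hsplit, ih]
    -- the reflection step: combine tail terms into one reflected sum
    have hrefl : (∑ c ∈ Finset.range (r + 1), (c : ℝ) ^ 2 * (d (r - c + 1) * d (r + 1)))
        + ((r + 1 : ℝ)) ^ 2 * (d 0 * d (r + 1)) =
        d (r + 1) * ∑ j ∈ Finset.range (r + 2),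
          (((r + 1 : ℝ)) - (j : ℝ)) ^ 2 * d j := by
      have h1 : ∑ j ∈ Finset.range (r + 2),
          (((r + 1 : ℝ)) - (j : ℝ)) ^ 2 * d j =
          ∑ c ∈ Finset.range (r + 2), (c : ℝ) ^ 2 * d (r + 1 - c) := by
        rw [← Finset.sum_range_reflect (fun j => (((r + 1 : ℝ)) - (j : ℝ)) ^ 2 * d j) (r + 2)]
        apply Finset.sum_congr rfl
        intro c hc
        have hcr : c ≤ r + 1 := by
          have := Finset.mem_range.mp hc; omega
        have h2 : r + 2 - 1 - c = r + 1 - c := by omega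
        rw [h2]
        have h3 : ((r + 1 - c : ℕ) : ℝ) = (r + 1 : ℝ) - (c : ℝ) := by
          push_cast [Nat.cast_sub hcr]
          ring
        rw [h3]
        have h4 : (r + 1 : ℝ) - ((r + 1 : ℝ) - (c : ℝ)) = (c : ℝ) := by ring
        rw [h4]
      rw [h1, Finset.sum_range_succ (fun c => (c : ℝ) ^ 2 * d (r + 1 - c)) (r + 1)]
      have h6 : r + 1 - (r + 1) = 0 := by omega
      rw [h6, mul_add, Finset.mul_sum]
      congr 1
      · apply Finset.sum_congr rfl
        intro c hc
        have hcr : c ≤ r := by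
          have := Finset.mem_range.mp hc; omega
        have h7 : r - c + 1 = r + 1 - c := by omega
        rw [h7]; ring
      · push_cast; ring
    rw [add_assoc, hrefl]
    -- expand the reflected sum in terms of moments over range (r+2)
    have hexp : ∑ j ∈ Finset.range (r + 2), (((r + 1 : ℝ)) - (j : ℝ)) ^ 2 * d j =
        ((r + 1 : ℝ)) ^ 2 * (∑ j ∈ Finset.range (r + 2), d j)
          - 2 * ((r + 1 : ℝ)) * (∑ j ∈ Finset.range (r + 2), (j : ℝ) * d j)
          + (∑ j ∈ Finset.range (r + 2), (j : ℝ) ^ 2 * d j) := by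
      rw [Finset.mul_sum, Finset.mul_sum, ← Finset.sum_sub_distrib, ← Finset.sum_add_distrib]
      apply Finset.sum_congr rfl
      intro j _
      ring
    rw [hexp]
    -- now everything is in terms of range (r+2) and range (r+1) moments
    rw [Finset.sum_range_succ (fun j => d j) (r + 1),
        Finset.sum_range_succ (fun j => (j : ℝ) * d j) (r + 1),
        Finset.sum_range_succ (fun j => (j : ℝ) ^ 2 * d j) (r + 1)]
    push_cast
    ring

theorem sum_csq_lag_eq_neg_sq_first_moment
    (r : ℕ) (hr : 1 ≤ r) (d : ℕ → ℝ)
    (hsum : ∑ j ∈ Finset.range (r + 1), d j = 0) :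
    (∑ c ∈ Finset.Icc 1 r, (c : ℝ) ^ 2 * (∑ j ∈ Finset.range (r - c + 1), d j * d (j + c)) =
      -(∑ j ∈ Finset.range (r + 1), (j : ℝ) * d j) ^ 2) ∧
    ((∑ c ∈ Finset.Icc 1 r, (c : ℝ) ^ 2 * (∑ j ∈ Finset.range (r - c + 1), d j * d (j + c)) = 0) ↔
      ∑ j ∈ Finset.range (r + 1), (j : ℝ) * d j = 0) := by
  have hIcc : ∑ c ∈ Finset.Icc 1 r, (c : ℝ) ^ 2 *
      (∑ j ∈ Finset.range (r - c + 1), d j * d (j + c)) =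
      ∑ c ∈ Finset.range (r + 1), (c : ℝ) ^ 2 *
        (∑ j ∈ Finset.range (r - c + 1), d j * d (j + c)) := by
    have hset : Finset.range (r + 1) = insert 0 (Finset.Icc 1 r) := by
      ext x
      simp [Finset.mem_range, Finset.mem_Icc]
      omega
    rw [hset, Finset.sum_insert (by simp)]
    simp
  have hmain : ∑ c ∈ Finset.Icc 1 r, (c : ℝ) ^ 2 *
      (∑ j ∈ Finset.range (r - c + 1), d j * d (j + c)) =
      -(∑ j ∈ Finset.range (r + 1), (j : ℝ) * d j) ^ 2 := by
    rw [hIcc, key_identity d r, hsum]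
    ring
  refine ⟨hmain, ?_⟩
  rw [hmain]
  constructor
  · intro h
    have := neg_eq_zero.mp h
    exact (pow_eq_zero_iff two_ne_zero).mp this
  · intro h
    rw [h]; ring
end

section
/- Let r ≥ 1, let d_0, ..., d_r be real numbers with C_0 = ∑_{j=0}^r d_j = 0, and let 1 ≤ k ≤ r-1. Then the conditions C_1 = C_2 = ... = C_k = 0 hold if and only if ∑_{c=1}^r c^{2s} D_c = 0 for all s = 1, ..., k, where C_p = ∑_{j=0}^r j^p d_j / p! and D_c = ∑_{j=0}^{r-c} d_j d_{j+c}. -/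
open Finset

lemma expand_aux (n r : ℕ) (d : ℕ → ℝ) :
    ∑ i ∈ range (r+1), ∑ j ∈ range (r+1), ((i:ℝ)-j)^n * (d i * d j)
    = ∑ m ∈ range (n+1), (-1:ℝ)^(m+n) * (n.choose m) *
        (∑ i ∈ range (r+1), (i:ℝ)^m * d i) *
        (∑ j ∈ range (r+1), (j:ℝ)^(n-m) * d j) := by
  simp_rw [sub_pow, Finset.sum_mul]
  conv_lhs => enter [2, i]; rw [Finset.sum_comm]
  rw [Finset.sum_comm]
  refine Finset.sum_congr rfl fun m _ => ?_
  rw [mul_assoc, Finset.sum_mul_sum]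
  simp_rw [Finset.mul_sum]
  refine Finset.sum_congr rfl fun i _ => Finset.sum_congr rfl fun j _ => ?_
  ring

lemma half_aux (r s : ℕ) (d : ℕ → ℝ) :
    ∑ p ∈ (range (r+1) ×ˢ range (r+1)).filter (fun p => p.1 < p.2),
        ((p.1:ℝ)-p.2)^(2*s) * (d p.1 * d p.2)
    = ∑ c ∈ Icc 1 r, (c:ℝ)^(2*s) * ∑ j ∈ range (r - c + 1), d j * d (j + c) := by
  rw [show (∑ c ∈ Icc 1 r, (c:ℝ)^(2*s) * ∑ j ∈ range (r - c + 1), d j * d (j + c))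
      = ∑ q ∈ (Icc 1 r).sigma (fun c => range (r - c + 1)),
          ((q.1:ℝ))^(2*s) * (d q.2 * d (q.2 + q.1)) from ?_]
  · refine Finset.sum_nbij' (fun p => ⟨p.2 - p.1, p.1⟩) (fun q => (q.2, q.2 + q.1)) ?_ ?_ ?_ ?_ ?_
    · intro p hp
      simp only [mem_filter, mem_product, mem_range] at hp
      simp only [mem_sigma, mem_Icc, mem_range]
      omega
    · intro q hq
      simp only [mem_sigma, mem_Icc, mem_range] at hq
      simp only [mem_filter, mem_product, mem_range]
      omega
    · intro p hp
      obtain ⟨a, b⟩ := p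
      simp only [mem_filter, mem_product, mem_range] at hp
      dsimp only
      simp only [Prod.mk.injEq]
      exact ⟨trivial, by omega⟩
    · intro q hq
      simp
    · intro p hp
      simp only [mem_filter, mem_product, mem_range] at hp
      have h1 : ((p.2 - p.1 : ℕ) : ℝ) = (p.2 : ℝ) - p.1 := by
        rw [Nat.cast_sub (le_of_lt hp.2)]
      have h2 : p.1 + (p.2 - p.1) = p.2 := by omega
      rw [h1, h2, show ((p.1:ℝ) - p.2) = -((p.2:ℝ) - p.1) by ring, (even_two_mul s).neg_pow]
  · rw [Finset.sum_sigma]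
    exact Finset.sum_congr rfl fun c _ => Finset.mul_sum _ _ _

lemma split_aux (r s : ℕ) (hs : 1 ≤ s) (d : ℕ → ℝ) :
    ∑ i ∈ range (r+1), ∑ j ∈ range (r+1), ((i:ℝ)-j)^(2*s) * (d i * d j)
    = 2 * ∑ c ∈ Icc 1 r, (c:ℝ)^(2*s) * ∑ j ∈ range (r - c + 1), d j * d (j + c) := by
  have half := half_aux r s d
  set F : ℕ × ℕ → ℝ := fun p => ((p.1:ℝ)-p.2)^(2*s) * (d p.1 * d p.2) with hF
  have h0 : ∑ i ∈ range (r+1), ∑ j ∈ range (r+1), ((i:ℝ)-j)^(2*s) * (d i * d j)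
      = ∑ p ∈ range (r+1) ×ˢ range (r+1), F p := by
    rw [Finset.sum_product]
  rw [h0, ← Finset.sum_filter_add_sum_filter_not (range (r+1) ×ˢ range (r+1))
      (fun p => p.1 < p.2) F]
  have h1 : ∑ p ∈ (range (r+1) ×ˢ range (r+1)).filter (fun p => ¬ p.1 < p.2), F p
      = ∑ p ∈ (range (r+1) ×ˢ range (r+1)).filter (fun p => p.1 < p.2), F p := by
    have h2 : ∑ p ∈ (range (r+1) ×ˢ range (r+1)).filter (fun p => ¬ p.1 < p.2), F p
        = ∑ p ∈ (range (r+1) ×ˢ range (r+1)).filter (fun p => p.2 < p.1), F p := by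
      rw [← Finset.sum_filter_add_sum_filter_not
          ((range (r+1) ×ˢ range (r+1)).filter (fun p => ¬ p.1 < p.2)) (fun p => p.2 < p.1) F]
      have hdiag : ∑ p ∈ (((range (r+1) ×ˢ range (r+1)).filter
          (fun p => ¬ p.1 < p.2)).filter (fun p => ¬ p.2 < p.1)), F p = 0 := by
        refine Finset.sum_eq_zero fun p hp => ?_
        simp only [mem_filter] at hp
        have : p.1 = p.2 := by omega
        simp only [hF, this, sub_self, ne_eq]
        rw [zero_pow (by omega), zero_mul]
      rw [hdiag, add_zero, Finset.filter_filter]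
      congr 1
      apply Finset.filter_congr
      intro p _
      omega
    rw [h2]
    refine Finset.sum_nbij' Prod.swap Prod.swap ?_ ?_ ?_ ?_ ?_
    · intro p hp; simp only [mem_filter, mem_product, mem_range] at hp ⊢
      exact ⟨⟨hp.1.2, hp.1.1⟩, hp.2⟩
    · intro p hp; simp only [mem_filter, mem_product, mem_range] at hp ⊢
      exact ⟨⟨hp.1.2, hp.1.1⟩, hp.2⟩
    · intro p _; simp
    · intro p _; simp
    · intro p _
      simp only [hF, Prod.fst_swap, Prod.snd_swap]
      rw [show ((p.2:ℝ) - p.1) = -((p.1:ℝ) - p.2) by ring, (even_two_mul s).neg_pow]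
      ring
  rw [h1, half]; ring

theorem moment_constraints_iff_weighted_lag_constraints
    (r : ℕ) (hr : 1 ≤ r) (d : ℕ → ℝ)
    (C : ℕ → ℝ) (hC : ∀ p, C p = (∑ j ∈ Finset.range (r + 1), (j : ℝ) ^ p * d j) / (Nat.factorial p))
    (D : ℕ → ℝ) (hD : ∀ c, D c = ∑ j ∈ Finset.range (r - c + 1), d j * d (j + c))
    (hC0 : C 0 = 0)
    (k : ℕ) (hk1 : 1 ≤ k) (hkr : k ≤ r - 1) :
    (∀ p, 1 ≤ p → p ≤ k → C p = 0) ↔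
      (∀ s, 1 ≤ s → s ≤ k → ∑ c ∈ Finset.Icc 1 r, (c : ℝ) ^ (2 * s) * D c = 0) := by
  set M : ℕ → ℝ := fun p => ∑ j ∈ range (r+1), (j:ℝ)^p * d j with hM
  have hfac : ∀ p : ℕ, ((Nat.factorial p : ℝ)) ≠ 0 :=
    fun p => Nat.cast_ne_zero.mpr (Nat.factorial_ne_zero p)
  have hCM : ∀ p, C p = 0 ↔ M p = 0 := by
    intro p
    rw [hC p, div_eq_zero_iff]
    exact ⟨fun h => h.resolve_right (hfac p), Or.inl⟩
  have hM0 : M 0 = 0 := (hCM 0).mp hC0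
  have hTD : ∀ s : ℕ, ∑ c ∈ Finset.Icc 1 r, (c : ℝ) ^ (2 * s) * D c
      = ∑ c ∈ Icc 1 r, (c:ℝ)^(2*s) * ∑ j ∈ range (r - c + 1), d j * d (j + c) :=
    fun s => Finset.sum_congr rfl fun c _ => by rw [hD c]
  have key : ∀ s : ℕ, 1 ≤ s →
      2 * ∑ c ∈ Finset.Icc 1 r, (c : ℝ) ^ (2 * s) * D c
      = ∑ m ∈ range (2*s+1), (-1:ℝ)^(m+2*s) * ((2*s).choose m) * M m * M (2*s - m) := by
    intro s hs
    rw [hTD s, ← split_aux r s hs d, expand_aux (2*s) r d]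
  constructor
  · intro h s hs1 hsk
    have hE : ∑ m ∈ range (2*s+1), (-1:ℝ)^(m+2*s) * ((2*s).choose m) * M m * M (2*s - m) = 0 := by
      refine Finset.sum_eq_zero fun m hm => ?_
      rcases le_or_gt m k with hmk | hmk
      · have : M m = 0 := by
          rcases Nat.eq_zero_or_pos m with h0 | hpos
          · rw [h0]; exact hM0
          · exact (hCM m).mp (h m hpos hmk)
        rw [this]; ring
      · have hle : 2*s - m ≤ k := by omega
        have : M (2*s - m) = 0 := by
          rcases Nat.eq_zero_or_pos (2*s - m) with h0 | hpos
          · rw [h0]; exact hM0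
          · exact (hCM _).mp (h _ hpos hle)
        rw [this]; ring
    have h2 := key s hs1
    rw [hE] at h2
    linarith
  · intro h
    have main : ∀ p, p ≤ k → M p = 0 := by
      intro p
      induction p using Nat.strong_induction_on with
      | _ p ih =>
        intro hpk
        rcases Nat.eq_zero_or_pos p with h0 | hpos
        · rw [h0]; exact hM0
        · have hT := h p hpos hpk
          have hE := key p hpos
          rw [hT, mul_zero] at hE
          have hsingle : ∑ m ∈ range (2*p+1),
              (-1:ℝ)^(m+2*p) * ((2*p).choose m) * M m * M (2*p - m)
              = (-1:ℝ)^(p+2*p) * ((2*p).choose p) * M p * M p := by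
            rw [Finset.sum_eq_single_of_mem p (by simp [mem_range]; omega)]
            · have : 2*p - p = p := by omega
              rw [this]
            · intro m hm hne
              rcases Nat.lt_or_ge m p with hlt | hge
              · rw [ih m hlt (by omega)]; ring
              · have hlt2 : 2*p - m < p := by omega
                rw [ih (2*p - m) hlt2 (by omega)]; ring
          rw [hsingle] at hE
          have hcne : ((-1:ℝ)^(p+2*p) * ((2*p).choose p) : ℝ) ≠ 0 :=
            mul_ne_zero (pow_ne_zero _ (by norm_num))
              (Nat.cast_ne_zero.mpr (Nat.choose_pos (by omega)).ne')
          rw [mul_assoc] at hE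
          have := (mul_eq_zero.mp hE.symm).resolve_left hcne
          exact mul_self_eq_zero.mp this
    intro p hp1 hpk
    exact (hCM p).mpr (main p hpk)
end

section
/- Let r ≥ 1 and let d_0, ..., d_r be any real numbers satisfying ∑_{j=0}^r d_j = 0 and ∑_{j=0}^r d_j^2 = 1. Then δ(r) = ∑_{c=1}^r (∑_{j=0}^{r-c} d_j d_{j+c})^2 ≥ 1/(4r), with equality if and only if ∑_{j=0}^{r-c} d_j d_{j+c} = -1/(2r) for every c = 1, ..., r. -/
open Finset

lemma sq_sum_aux (d : ℕ → ℝ) (n : ℕ) :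
    (∑ j ∈ range n, d j) ^ 2 =
      ∑ j ∈ range n, (d j) ^ 2 +
        2 * ∑ j ∈ range n, d j * ∑ k ∈ Icc (j + 1) (n - 1), d k := by
  induction n with
  | zero => simp
  | succ n ih =>
    rw [sum_range_succ, add_sq, ih]
    have h1 : ∀ j ∈ range n, d j * ∑ k ∈ Icc (j+1) n, d k
        = d j * ∑ k ∈ Icc (j+1) (n-1), d k + d j * d n := by
      intro j hj
      rw [mem_range] at hj
      have : Icc (j+1) n = insert n (Icc (j+1) (n-1)) := by
        ext x; simp only [mem_Icc, mem_insert]; omega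
      rw [this, sum_insert (by simp; omega), mul_add, add_comm]
    have h2 : ∑ j ∈ range (n+1), d j * ∑ k ∈ Icc (j+1) ((n+1)-1), d k
        = (∑ j ∈ range n, d j * ∑ k ∈ Icc (j+1) (n-1), d k) + (∑ j ∈ range n, d j) * d n := by
      rw [sum_range_succ]
      simp only [Nat.add_sub_cancel]
      rw [Finset.sum_congr rfl h1, sum_add_distrib, ← sum_mul]
      simp
    rw [sum_range_succ, h2]; ring

theorem delta_ge_inv_four_r
    (r : ℕ) (hr : 1 ≤ r) (d : ℕ → ℝ)
    (hsum : ∑ j ∈ Finset.range (r + 1), d j = 0)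
    (hnorm : ∑ j ∈ Finset.range (r + 1), (d j) ^ 2 = 1) :
    (1 / (4 * (r : ℝ)) ≤
        ∑ c ∈ Finset.Icc 1 r, (∑ j ∈ Finset.range (r - c + 1), d j * d (j + c)) ^ 2) ∧
    ((∑ c ∈ Finset.Icc 1 r, (∑ j ∈ Finset.range (r - c + 1), d j * d (j + c)) ^ 2 =
        1 / (4 * (r : ℝ))) ↔
      ∀ c ∈ Finset.Icc 1 r,
        (∑ j ∈ Finset.range (r - c + 1), d j * d (j + c)) = -(1 / (2 * (r : ℝ)))) := by
  set D : ℕ → ℝ := fun c => ∑ j ∈ range (r - c + 1), d j * d (j + c) with hD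
  have hrpos : (0:ℝ) < r := by exact_mod_cast hr
  -- Step 1: ∑ D c = -1/2
  have key : ∑ c ∈ Icc 1 r, D c = -(1/2) := by
    have e1 : ∀ c ∈ Icc 1 r, D c =
        ∑ j ∈ range (r + 1), (if j + c ≤ r then d j * d (j + c) else 0) := by
      intro c hc
      rw [mem_Icc] at hc
      rw [← sum_filter]
      have hf : (range (r + 1)).filter (fun j => j + c ≤ r) = range (r - c + 1) := by
        ext x; simp only [mem_filter, mem_range]; omega
      rw [hf]
    rw [Finset.sum_congr rfl e1, Finset.sum_comm]
    have e2 : ∀ j ∈ range (r + 1),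
        (∑ c ∈ Icc 1 r, if j + c ≤ r then d j * d (j + c) else 0)
          = d j * ∑ k ∈ Icc (j + 1) r, d k := by
      intro j hj
      rw [mem_range] at hj
      rw [← sum_filter]
      have hf : (Icc 1 r).filter (fun c => j + c ≤ r) = Icc 1 (r - j) := by
        ext x; simp only [mem_filter, mem_Icc]; omega
      rw [hf, mul_sum]
      have : Icc (j+1) r = (Icc 1 (r-j)).map (addLeftEmbedding j) := by
        rw [map_add_left_Icc]
        congr 1
        omega
      rw [this, sum_map]
      rfl
    rw [Finset.sum_congr rfl e2]
    have hsq := sq_sum_aux d (r + 1)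
    simp only [Nat.add_sub_cancel] at hsq
    rw [hsum, hnorm] at hsq
    nlinarith [hsq]
  -- Step 2: sum of squares identity
  have card_Icc : (Icc 1 r).card = r := by simp
  have iden : ∑ c ∈ Icc 1 r, (D c + 1 / (2 * (r:ℝ))) ^ 2
      = (∑ c ∈ Icc 1 r, (D c) ^ 2) - 1 / (4 * (r:ℝ)) := by
    have : ∀ c ∈ Icc 1 r, (D c + 1 / (2 * (r:ℝ))) ^ 2
        = (D c)^2 + (1/(r:ℝ)) * D c + 1/(4*(r:ℝ)^2) := by
      intro c _; field_simp; ring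
    rw [Finset.sum_congr rfl this, sum_add_distrib, sum_add_distrib, ← mul_sum, key,
      sum_const, card_Icc, nsmul_eq_mul]
    field_simp
    ring
  have hnn : (0:ℝ) ≤ ∑ c ∈ Icc 1 r, (D c + 1 / (2 * (r:ℝ))) ^ 2 :=
    Finset.sum_nonneg fun c _ => sq_nonneg _
  constructor
  · nlinarith [iden, hnn]
  · constructor
    · intro h
      have hz : ∑ c ∈ Icc 1 r, (D c + 1 / (2 * (r:ℝ))) ^ 2 = 0 := by
        rw [iden, h]; ring
      intro c hc
      have := (Finset.sum_eq_zero_iff_of_nonneg (fun c _ => sq_nonneg _)).mp hz c hc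
      have h2 : D c + 1 / (2 * (r:ℝ)) = 0 := by
        exact pow_eq_zero_iff (by norm_num) |>.mp this
      have : D c = -(1 / (2 * (r:ℝ))) := by linarith
      simpa [hD] using this
    · intro h
      have hDc : ∀ c ∈ Icc 1 r, (D c)^2 = (1 / (2 * (r:ℝ)))^2 := by
        intro c hc
        have := h c hc
        simp only [hD] at this ⊢
        rw [this]; ring
      rw [Finset.sum_congr rfl hDc, sum_const, card_Icc, nsmul_eq_mul]
      field_simp
      ring
end

section
/- Let r ≥ 1 and define d_j = (-1)^j binom(r, j) / binom(2r, r)^{1/2} for j = 0, ..., r. Then δ_ord(r) := ∑_{c=1}^r (∑_{j=0}^{r-c} d_j d_{j+c})^2 = (1/2) [ binom(4r, 2r) / binom(2r, r)^2 - 1 ]. -/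
open Finset

lemma vand (r c : ℕ) (hc : c ≤ r) :
    ∑ j ∈ range (r - c + 1), r.choose j * r.choose (j + c) = (2*r).choose (r - c) := by
  have h := Nat.add_choose_eq r r (r - c)
  rw [Finset.Nat.sum_antidiagonal_eq_sum_range_succ_mk] at h
  rw [two_mul, h]
  apply Finset.sum_congr rfl
  intro j hj
  simp only [mem_range] at hj
  congr 1
  rw [← Nat.choose_symm (by omega : j + c ≤ r)]
  congr 1
  omega

lemma sumsq (r : ℕ) :
    ∑ k ∈ range (2*r+1), ((2*r).choose k)^2 = (4*r).choose (2*r) := by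
  have h := Nat.add_choose_eq (2*r) (2*r) (2*r)
  rw [Finset.Nat.sum_antidiagonal_eq_sum_range_succ_mk] at h
  have h4 : 4*r = 2*r + 2*r := by ring
  rw [h4, h]
  apply Finset.sum_congr rfl
  intro k hk
  simp only [mem_range] at hk
  rw [sq, Nat.choose_symm (by omega : k ≤ 2*r)]

lemma split (r : ℕ) :
    (4*r).choose (2*r) =
      2 * ∑ c ∈ Icc 1 r, ((2*r).choose (r - c))^2 + ((2*r).choose r)^2 := by
  rw [← sumsq]
  have h1 : ∑ k ∈ range (2*r+1), ((2*r).choose k)^2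
      = ∑ k ∈ range (r+1), ((2*r).choose k)^2
        + ∑ k ∈ Ico (r+1) (2*r+1), ((2*r).choose k)^2 := by
    rw [range_eq_Ico, ← Finset.sum_Ico_consecutive _ (by omega : 0 ≤ r+1) (by omega : r+1 ≤ 2*r+1),
      ← range_eq_Ico]
  rw [h1, Finset.sum_range_succ]
  have h2 : ∑ k ∈ Ico (r+1) (2*r+1), ((2*r).choose k)^2
      = ∑ i ∈ range r, ((2*r).choose (r - 1 - i))^2 := by
    rw [Finset.sum_Ico_eq_sum_range]
    have hn : 2*r+1 - (r+1) = r := by omega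
    rw [hn]
    apply Finset.sum_congr rfl
    intro i hi
    simp only [mem_range] at hi
    rw [← Nat.choose_symm (by omega : r + 1 + i ≤ 2*r)]
    congr 2
    omega
  have h3 : ∑ c ∈ Icc 1 r, ((2*r).choose (r - c))^2
      = ∑ i ∈ range r, ((2*r).choose (r - 1 - i))^2 := by
    rw [← Finset.Ico_add_one_right_eq_Icc, Finset.sum_Ico_eq_sum_range]
    have hn : r + 1 - 1 = r := by omega
    rw [hn]
    apply Finset.sum_congr rfl
    intro i hi
    congr 2
    omega
  have h4 : ∑ k ∈ range r, ((2*r).choose k)^2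
      = ∑ i ∈ range r, ((2*r).choose (r - 1 - i))^2 := by
    rw [← Finset.sum_range_reflect]
  rw [h2, h3, h4]
  ring

theorem ordinary_difference_sequence_delta
    (r : ℕ) (hr : 1 ≤ r) (d : ℕ → ℝ)
    (hd : ∀ j, d j = (-1 : ℝ) ^ j * (Nat.choose r j : ℝ) / Real.sqrt (Nat.choose (2 * r) r)) :
    ∑ c ∈ Finset.Icc 1 r, (∑ j ∈ Finset.range (r - c + 1), d j * d (j + c)) ^ 2 =
      (1 / 2) * ((Nat.choose (4 * r) (2 * r) : ℝ) / (Nat.choose (2 * r) r : ℝ) ^ 2 - 1) := by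
  set B : ℝ := ((2*r).choose r : ℝ) with hB
  have hBpos : (0:ℝ) < B := by
    rw [hB]
    exact_mod_cast Nat.choose_pos (by omega : r ≤ 2*r)
  have hs : Real.sqrt B * Real.sqrt B = B := Real.mul_self_sqrt hBpos.le
  have hinner : ∀ c ∈ Icc 1 r,
      (∑ j ∈ Finset.range (r - c + 1), d j * d (j + c)) ^ 2
        = ((2*r).choose (r - c) : ℝ)^2 / B^2 := by
    intro c hc
    simp only [mem_Icc] at hc
    have : ∑ j ∈ Finset.range (r - c + 1), d j * d (j + c)
        = (-1)^c * ((2*r).choose (r - c) : ℝ) / B := by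
      have : ∀ j, d j * d (j + c)
          = (-1:ℝ)^c * ((r.choose j : ℝ) * (r.choose (j+c) : ℝ)) / B := by
        intro j
        rw [hd j, hd (j+c)]
        have hsign : ((-1:ℝ)^j) * (-1:ℝ)^(j+c) = (-1:ℝ)^c := by
          rw [← pow_add]
          have hjc : j + (j + c) = 2*j + c := by ring
          rw [hjc, pow_add, pow_mul]
          norm_num
        field_simp
        rw [Real.sq_sqrt hBpos.le]
        linear_combination ((r.choose j : ℝ) * (r.choose (j+c) : ℝ) * B) * hsign
      rw [Finset.sum_congr rfl (fun j _ => this j), ← Finset.sum_div, ← Finset.mul_sum]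
      congr 1
      congr 1
      have := vand r c hc.2
      push_cast [← this]
      rfl
    rw [this]
    rw [div_pow, mul_pow]
    have : ((-1:ℝ)^c)^2 = 1 := by
      rw [← pow_mul, mul_comm, pow_mul]
      norm_num
    rw [this, one_mul]
  rw [Finset.sum_congr rfl hinner, ← Finset.sum_div]
  have hkey : ((4*r).choose (2*r) : ℝ)
      = 2 * ∑ c ∈ Icc 1 r, (((2*r).choose (r - c) : ℝ))^2 + B^2 := by
    have := split r
    push_cast [this]
    ring
  rw [hkey]
  have hB2 : B^2 ≠ 0 := by positivity
  field_simp
  ring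
end
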